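/- Let γ: T → S be a morphism of semirings, M a left S-semimodule, and A a left T-semimodule that is M-i-injective as a T-semimodule (viewing M as a T-semimodule via γ). Then Hom_T(S, A), with left S-action (s·f)(t) = f(ts), is M-i-injective as a left S-semimodule: every S-linear map from a subtractive S-subsemimodule K of M to Hom_T(S, A) extends to an S-linear map M → Hom_T(S, A). -/
import Mathlib


/-- A map `f : S →+ A` is `T`-linear with respect to `γ : T → S`, i.e. a morphism in
`Hom_T(S, A)` where `S` is viewed as a `T`-`S`-bisemimodule via `γ`. -/
def IsTLinear {T S A : Type*} [Semiring T] [Semiring S] [AddCommMonoid A] [Module T A]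
    (γ : T →+* S) (f : S →+ A) : Prop :=
  ∀ (t : T) (s : S), f (γ t * s) = t • f s

/-- If `A` is `M`-`i`-injective as a `T`-semimodule (via `γ : T → S`), then
`Hom_T(S, A)` with the action `(s • f) x = f (x * s)` is `M`-`i`-injective as a left
`S`-semimodule: every `S`-linear map from a subtractive `S`-subsemimodule `K ≤ M`
into `Hom_T(S, A)` extends to `M`. -/
theorem stmt_19 {T S M A : Type} [Semiring T] [Semiring S] (γ : T →+* S)
    [AddCommMonoid M] [Module S M] [AddCommMonoid A] [Module T A]
    (hA : ∀ (K : Type) [AddCommMonoid K] [Module T K] (ι : K →+ M),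
      (∀ (t : T) (k : K), ι (t • k) = γ t • ι k) →
      Function.Injective ι →
      (∀ (m : M) (k k' : K), m + ι k = ι k' → ∃ k'' : K, ι k'' = m) →
      ∀ g : K →+ A, (∀ (t : T) (k : K), g (t • k) = t • g k) →
        ∃ h : M →+ A, (∀ (t : T) (m : M), h (γ t • m) = t • h m) ∧ h.comp ι = g)
    (K : Submodule S M) (hK : ∀ m k : M, k ∈ K → m + k ∈ K → m ∈ K)
    (g : K →+ (S →+ A))
    (hgT : ∀ k : K, IsTLinear γ (g k))
    (hgS : ∀ (s : S) (k : K) (x : S), g (s • k) x = g k (x * s)) :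
    ∃ h : M → (S →+ A),
      (∀ m : M, IsTLinear γ (h m)) ∧
      (∀ m m' : M, h (m + m') = h m + h m') ∧
      (∀ (s : S) (m : M) (x : S), h (s • m) x = h m (x * s)) ∧
      (∀ k : K, h (k : M) = g k) := by
  letI : Module T K := Module.compHom K γ
  have hsmul : ∀ (t : T) (k : K), t • k = γ t • k := fun t k => rfl
  set ι : K →+ M := K.subtype.toAddMonoidHom with hι
  have hιT : ∀ (t : T) (k : K), ι (t • k) = γ t • ι k := fun t k => rfl
  have hιinj : Function.Injective ι := Subtype.coe_injective
  have hsub : ∀ (m : M) (k k' : K), m + ι k = ι k' → ∃ k'' : K, ι k'' = m := by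
    intro m k k' hmk
    have hm : m ∈ K := hK m k k.2 (hmk ▸ k'.2)
    exact ⟨⟨m, hm⟩, rfl⟩
  set g' : K →+ A :=
    { toFun := fun k => g k 1
      map_zero' := by simp
      map_add' := by intro a b; simp } with hg'
  have hg'T : ∀ (t : T) (k : K), g' (t • k) = t • g' k := by
    intro t k
    show g (γ t • k) 1 = t • g k 1
    rw [hgS, one_mul, ← mul_one (γ t), hgT]
  obtain ⟨h₀, h₀T, h₀g⟩ := hA K ι hιT hιinj hsub g' hg'T
  refine ⟨fun m =>
    { toFun := fun x => h₀ (x • m)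
      map_zero' := by show h₀ ((0:S) • m) = 0; rw [zero_smul, map_zero]
      map_add' := by intro a b; show h₀ ((a+b) • m) = h₀ (a • m) + h₀ (b • m); rw [add_smul, map_add] }, ?_, ?_, ?_, ?_⟩
  · intro m t s
    show h₀ ((γ t * s) • m) = t • h₀ (s • m)
    rw [mul_smul]; exact h₀T t (s • m)
  · intro m m'
    ext x
    show h₀ (x • (m + m')) = h₀ (x • m) + h₀ (x • m')
    rw [smul_add, map_add]
  · intro s m x
    show h₀ (x • s • m) = h₀ ((x * s) • m)
    rw [mul_smul]
  · intro k
    ext x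
    show h₀ (x • (k : M)) = g k x
    have : x • (k : M) = ι (x • k) := rfl
    rw [this]
    have := DFunLike.congr_fun h₀g (x • k)
    rw [AddMonoidHom.comp_apply] at this
    rw [this]
    show g (x • k) 1 = g k x
    rw [hgS, one_mul]
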